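/- For integers a, b, c, the form aX² + bY² + cZ² is universal over M₂(ℤ) if and only if a, b, c are pairwise coprime and abc is not a multiple of 4. -/

import Mathlib

open Matrix


lemma build (s t r σ τ x₁ y₁ z₁ x₂ y₂ z₂ e : ℤ) (M : Matrix (Fin 2) (Fin 2) ℤ)
    (h00 : s*(x₁^2 + y₁*z₁) + t*(x₂^2 + y₂*z₂) + r*e = M 0 0)
    (h01 : s*(σ*y₁) + t*(τ*y₂) = M 0 1)
    (h10 : s*(σ*z₁) + t*(τ*z₂) = M 1 0)
    (h11 : s*((σ-x₁)^2 + y₁*z₁) + t*((τ-x₂)^2 + y₂*z₂) + r*e = M 1 1) :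
    ∃ A B C : Matrix (Fin 2) (Fin 2) ℤ, M = s • A ^ 2 + t • B ^ 2 + r • C ^ 2 := by
  refine ⟨!![x₁, y₁; z₁, σ - x₁], !![x₂, y₂; z₂, τ - x₂], !![0, 1; e, 0], ?_⟩
  ext i j
  fin_cases i <;> fin_cases j <;>
    simp [pow_two, Matrix.mul_apply, Fin.sum_univ_two, Matrix.add_apply, Matrix.smul_apply] <;>
    [linarith [h00]; linarith [h01]; linarith [h10]; linarith [h11]]

/-- The scalar-soak scheme. -/
lemma soak (s t r σ τ d ss tt k μ ν h : ℤ) (M : Matrix (Fin 2) (Fin 2) ℤ)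
    (h1 : s * σ = d * ss) (h2 : t * τ = d * tt) (h3 : tt = r * k)
    (hco1 : IsCoprime ss tt) (hco2 : IsCoprime ss r) (hco3 : IsCoprime t r)
    (hm01 : M 0 1 = d * μ) (hm10 : M 1 0 = d * ν)
    (hR : M 0 0 - M 1 1 + s*σ^2 + t*τ^2 = 2*d*h) :
    ∃ A B C : Matrix (Fin 2) (Fin 2) ℤ, M = s • A ^ 2 + t • B ^ 2 + r • C ^ 2 := by
  obtain ⟨u, v, huv⟩ := hco1
  obtain ⟨ai, bi, hai⟩ := id hco2
  obtain ⟨x₁, hx₁⟩ : ∃ q : ℤ, q = u * h := ⟨_, rfl⟩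
  obtain ⟨x₂, hx₂⟩ : ∃ q : ℤ, q = v * h := ⟨_, rfl⟩
  obtain ⟨s₂, hs₂⟩ : ∃ q : ℤ, q = ai * (v * ν - 1) := ⟨_, rfl⟩
  obtain ⟨z₁, hz₁⟩ : ∃ q : ℤ, q = u * ν + tt * s₂ := ⟨_, rfl⟩
  obtain ⟨z₂, hz₂⟩ : ∃ q : ℤ, q = v * ν - ss * s₂ := ⟨_, rfl⟩
  have hz2 : z₂ = 1 + r * (bi * (v * ν - 1)) := by
    rw [hz₂, hs₂]; linear_combination (-(v * ν - 1)) * hai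
  have hz₂r : IsCoprime z₂ r := ⟨1, -(bi * (v * ν - 1)), by linear_combination hz2⟩
  have hKr : IsCoprime (t * (ss * z₂)) r := hco3.mul_left (hco2.mul_left hz₂r)
  obtain ⟨w, w', hw⟩ := hKr
  obtain ⟨g, hg⟩ : ∃ q : ℤ,
      q = M 0 0 - (s*(x₁^2 + (u*μ)*z₁) + t*(x₂^2 + (v*μ)*z₂)) := ⟨_, rfl⟩
  obtain ⟨s₁, hs₁⟩ : ∃ q : ℤ, q = -(w * g) := ⟨_, rfl⟩
  obtain ⟨y₁, hy₁⟩ : ∃ q : ℤ, q = u * μ + tt * s₁ := ⟨_, rfl⟩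
  obtain ⟨y₂, hy₂⟩ : ∃ q : ℤ, q = v * μ - ss * s₁ := ⟨_, rfl⟩
  obtain ⟨e, he⟩ : ∃ q : ℤ, q = g * w' + w * g * s * k * z₁ := ⟨_, rfl⟩
  have h00 : s*(x₁^2 + y₁*z₁) + t*(x₂^2 + y₂*z₂) + r*e = M 0 0 := by
    rw [hy₁, hy₂, hs₁, he]
    linear_combination hg + g*hw - w*s*g*z₁*h3
  have h01 : s*(σ*y₁) + t*(τ*y₂) = M 0 1 := by
    rw [hy₁, hy₂]
    linear_combination (u*μ + tt*s₁)*h1 + (v*μ - ss*s₁)*h2 + d*μ*huv - hm01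
  have h10 : s*(σ*z₁) + t*(τ*z₂) = M 1 0 := by
    rw [hz₁, hz₂]
    linear_combination (u*ν + tt*s₂)*h1 + (v*ν - ss*s₂)*h2 + d*ν*huv - hm10
  have h11 : s*((σ-x₁)^2 + y₁*z₁) + t*((τ-x₂)^2 + y₂*z₂) + r*e = M 1 1 := by
    linear_combination h00 + hR - 2*x₁*h1 - 2*x₂*h2 - 2*d*ss*hx₁ - 2*d*tt*hx₂ - 2*d*h*huv
  exact build s t r σ τ x₁ y₁ z₁ x₂ y₂ z₂ e M h00 h01 h10 h11

lemma odd_cast2 {x : ℤ} (h : Odd x) : (x : ZMod 2) = 1 := by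
  obtain ⟨m, rfl⟩ := h; push_cast
  have : (2 : ZMod 2) = 0 := rfl
  rw [this]; ring

lemma odd_of_cast2 {x : ℤ} (h : (x : ZMod 2) = 1) : Odd x := by
  rcases Int.even_or_odd x with he | ho
  · obtain ⟨m, rfl⟩ := he
    push_cast at h
    have h20 : (2 : ZMod 2) = 0 := rfl
    rw [show ((m : ZMod 2) + m) = 2 * m by ring, h20] at h
    simp at h
  · exact ho

/-- The weave scheme for: a = 2a₀, trM even, M 0 1 odd. -/
lemma weave (b c a₀ h : ℤ) (M : Matrix (Fin 2) (Fin 2) ℤ)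
    (hco1 : IsCoprime b (c * a₀)) (hco2 : IsCoprime b a₀) (hco3 : IsCoprime c a₀)
    (hb : Odd b) (hc : Odd c) (ha₀ : Odd a₀) (hμ : Odd (M 0 1))
    (hR : M 0 0 - M 1 1 + b + c*a₀^2 = 2*h) :
    ∃ A B C : Matrix (Fin 2) (Fin 2) ℤ, M = b • A ^ 2 + c • B ^ 2 + (2*a₀) • C ^ 2 := by
  obtain ⟨u, v, huv⟩ := hco1
  obtain ⟨ai, bi, hai⟩ := id hco2
  obtain ⟨x₁, hx₁⟩ : ∃ q : ℤ, q = u * h := ⟨_, rfl⟩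
  obtain ⟨x₂, hx₂⟩ : ∃ q : ℤ, q = v * h := ⟨_, rfl⟩
  obtain ⟨s₂, hs₂⟩ : ∃ q : ℤ, q = ai * (v * (M 1 0) - 1) := ⟨_, rfl⟩
  obtain ⟨z₁, hz₁⟩ : ∃ q : ℤ, q = u * (M 1 0) + c * a₀ * s₂ := ⟨_, rfl⟩
  obtain ⟨z₂, hz₂⟩ : ∃ q : ℤ, q = v * (M 1 0) - b * s₂ := ⟨_, rfl⟩
  have hz2 : z₂ = 1 + a₀ * (bi * (v * (M 1 0) - 1)) := by
    rw [hz₂, hs₂]; linear_combination (-(v * (M 1 0) - 1)) * hai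
  have hKa : IsCoprime (c * (b * (z₂ - a₀ * z₁))) a₀ :=
    hco3.mul_left (hco2.mul_left ⟨1, -(bi * (v * (M 1 0) - 1)) + z₁, by linear_combination hz2⟩)
  obtain ⟨w, w', hw⟩ := hKa
  obtain ⟨g, hg⟩ : ∃ q : ℤ,
      q = M 0 0 - (b*(x₁^2 + (u*(M 0 1))*z₁) + c*(x₂^2 + (v*(M 0 1))*z₂)) := ⟨_, rfl⟩
  obtain ⟨s₁, hs₁⟩ : ∃ q : ℤ, q = -(w * g) := ⟨_, rfl⟩
  obtain ⟨y₁, hy₁⟩ : ∃ q : ℤ, q = u * (M 0 1) + c * a₀ * s₁ := ⟨_, rfl⟩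
  obtain ⟨y₂, hy₂⟩ : ∃ q : ℤ, q = v * (M 0 1) - b * s₁ := ⟨_, rfl⟩
  have h01 : b*(1*y₁) + c*(a₀*y₂) = M 0 1 := by
    rw [hy₁, hy₂]; linear_combination (M 0 1) * huv
  -- parity: T := b*c*(a₀*y₁ - y₂) is odd
  have hT : Odd (b*c*(a₀*y₁ - y₂)) := by
    apply odd_of_cast2
    have hcast := congrArg (fun x : ℤ => (x : ZMod 2)) h01
    push_cast at hcast
    rw [odd_cast2 hb, odd_cast2 hc, odd_cast2 ha₀, odd_cast2 hμ] at hcast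
    push_cast
    rw [odd_cast2 hb, odd_cast2 hc, odd_cast2 ha₀]
    have h2 : (y₁ : ZMod 2) + (y₂ : ZMod 2) = 1 := by linear_combination hcast
    have h20 : (2 : ZMod 2) = 0 := rfl
    linear_combination h2 - (y₂ : ZMod 2) * h20
  have key : ∀ ε e : ℤ, g*w' - ε*(b*c*(a₀*y₁ - y₂)) = 2*e →
      ∃ A B C : Matrix (Fin 2) (Fin 2) ℤ, M = b • A ^ 2 + c • B ^ 2 + (2*a₀) • C ^ 2 := by
    intro ε e hε
    have h00 : b*(x₁^2 + y₁*(z₁ + c*a₀^2*ε)) + c*(x₂^2 + y₂*(z₂ - b*a₀*ε)) + (2*a₀)*e = M 0 0 := by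
      linear_combination (b*z₁)*hy₁ + (c*z₂)*hy₂ + hg + (c*b*(a₀*z₁ - z₂))*hs₁ + g*hw - a₀*hε
    have h10 : b*(1*(z₁ + c*a₀^2*ε)) + c*(a₀*(z₂ - b*a₀*ε)) = M 1 0 := by
      rw [hz₁, hz₂]; linear_combination (M 1 0) * huv
    have h11 : b*((1-x₁)^2 + y₁*(z₁ + c*a₀^2*ε)) + c*((a₀-x₂)^2 + y₂*(z₂ - b*a₀*ε)) + (2*a₀)*e
        = M 1 1 := by
      linear_combination h00 + hR - 2*b*hx₁ - 2*c*a₀*hx₂ - 2*h*huv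
    exact build b c (2*a₀) 1 a₀ x₁ y₁ (z₁ + c*a₀^2*ε) x₂ y₂ (z₂ - b*a₀*ε) e M h00 h01 h10 h11
  rcases Int.even_or_odd (g * w') with hG | hG
  · obtain ⟨e', he'⟩ := hG
    exact key 0 e' (by linarith)
  · obtain ⟨g', hg'⟩ := hG
    obtain ⟨t', ht'⟩ := hT
    exact key 1 (g' - t') (by linarith)

lemma sq_entry (X : Matrix (Fin 2) (Fin 2) ℤ) (i j : Fin 2) :
    (X ^ 2) i j = X i 0 * X 0 j + X i 1 * X 1 j := by
  rw [pow_two, Matrix.mul_apply, Fin.sum_univ_two]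

/-- Extract entry equations from a representation. -/
lemma entries {x y z : ℤ} {X Y Z M : Matrix (Fin 2) (Fin 2) ℤ}
    (h : M = x • X ^ 2 + y • Y ^ 2 + z • Z ^ 2) (i j : Fin 2) :
    M i j = x*(X i 0 * X 0 j + X i 1 * X 1 j) + y*(Y i 0 * Y 0 j + Y i 1 * Y 1 j)
      + z*(Z i 0 * Z 0 j + Z i 1 * Z 1 j) := by
  have := congrArg (fun N : Matrix (Fin 2) (Fin 2) ℤ => N i j) h
  simp only [Matrix.add_apply, Matrix.smul_apply, smul_eq_mul, sq_entry] at this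
  exact this

/-- Field argument: z·Z² cannot be the nilpotent E₁₂. -/
lemma no_nilp {K : Type*} [Field K] {z p q r s : K}
    (h00 : (0:K) = z*(p*p + q*r)) (h01 : (1:K) = z*(q*(p+s)))
    (h10 : (0:K) = z*(r*(p+s))) (h11 : (0:K) = z*(r*q + s*s)) : False := by
  have hz : z ≠ 0 := by rintro rfl; simp at h01
  have hps : (p+s) ≠ 0 := by rintro hps; rw [hps] at h01; simp at h01
  have hr : r = 0 := by
    rcases mul_eq_zero.mp h10.symm with h | h
    · exact absurd h hz
    · rcases mul_eq_zero.mp h with h | h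
      · exact h
      · exact absurd h hps
  have hp : p = 0 := by
    rw [hr] at h00; simp at h00
    rcases h00 with h | h
    · exact absurd h hz
    · exact h
  have hs : s = 0 := by
    rw [hr] at h11; simp at h11
    rcases h11 with h | h
    · exact absurd h hz
    · exact h
  rw [hp, hs] at hps; simp at hps

/-- If a prime divides two of the coefficients, E₁₂ is not represented. -/
lemma nec_cop {p : ℕ} (hp : p.Prime) {x y z : ℤ} {X Y Z : Matrix (Fin 2) (Fin 2) ℤ}
    (hx : (p:ℤ) ∣ x) (hy : (p:ℤ) ∣ y)
    (h : (!![0,1;0,0] : Matrix (Fin 2) (Fin 2) ℤ) = x • X ^ 2 + y • Y ^ 2 + z • Z ^ 2) :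
    False := by
  haveI := Fact.mk hp
  have e00 := entries h 0 0
  have e01 := entries h 0 1
  have e10 := entries h 1 0
  have e11 := entries h 1 1
  rw [show (!![0,1;0,0] : Matrix (Fin 2) (Fin 2) ℤ) 0 0 = 0 from rfl] at e00
  rw [show (!![0,1;0,0] : Matrix (Fin 2) (Fin 2) ℤ) 0 1 = 1 from rfl] at e01
  rw [show (!![0,1;0,0] : Matrix (Fin 2) (Fin 2) ℤ) 1 0 = 0 from rfl] at e10
  rw [show (!![0,1;0,0] : Matrix (Fin 2) (Fin 2) ℤ) 1 1 = 0 from rfl] at e11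
  have hx0 : ((x : ℤ) : ZMod p) = 0 := (ZMod.intCast_zmod_eq_zero_iff_dvd x p).mpr hx
  have hy0 : ((y : ℤ) : ZMod p) = 0 := (ZMod.intCast_zmod_eq_zero_iff_dvd y p).mpr hy
  have c00 := congrArg (fun t : ℤ => (t : ZMod p)) e00
  have c01 := congrArg (fun t : ℤ => (t : ZMod p)) e01
  have c10 := congrArg (fun t : ℤ => (t : ZMod p)) e10
  have c11 := congrArg (fun t : ℤ => (t : ZMod p)) e11
  push_cast at c00 c01 c10 c11
  rw [hx0, hy0] at c00 c01 c10 c11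
  exact no_nilp (z := (z : ZMod p)) (p := (Z 0 0 : ZMod p)) (q := (Z 0 1 : ZMod p))
    (r := (Z 1 0 : ZMod p)) (s := (Z 1 1 : ZMod p))
    (by linear_combination c00) (by linear_combination c01)
    (by linear_combination c10) (by linear_combination c11)

lemma even_cast2 {x : ℤ} (h : Even x) : (x : ZMod 2) = 0 := by
  obtain ⟨m, rfl⟩ := h; push_cast
  rw [show ((m : ZMod 2) + m) = 2 * m by ring, show (2 : ZMod 2) = 0 from rfl]; ring

lemma dvd4_cast {x : ℤ} (h : (4:ℤ) ∣ x) : (x : ZMod 4) = 0 :=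
  (ZMod.intCast_zmod_eq_zero_iff_dvd x 4).mpr h

lemma dvd2_of_dvd4 {x : ℤ} (h : (4:ℤ) ∣ x) : (2:ℤ) ∣ x := dvd_trans (by norm_num) h

/-- difference of squares with even sum is divisible by 4 -/
lemma sq_diff_dvd4 {p s : ℤ} (h : Even (p + s)) : (4:ℤ) ∣ (p*p - s*s) := by
  obtain ⟨m, hm⟩ := h
  exact ⟨m*(m-s), by linear_combination (p - s + 2*m) * hm⟩

/-- sum of squares with odd sum is 1 mod 4 -/
lemma sq_sum_odd {p s : ℤ} (h : Odd (p + s)) : ∃ w, p*p + s*s = 4*w + 1 := by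
  rcases Int.even_or_odd p with hp | hp
  · obtain ⟨i, hi⟩ := hp
    have hs : Odd s := by
      rcases Int.even_or_odd s with hs | hs
      · exfalso; obtain ⟨j, hj⟩ := hs
        obtain ⟨m, hm⟩ := h; omega
      · exact hs
    obtain ⟨j, hj⟩ := hs
    exact ⟨i*i + j*j + j, by rw [hi, hj]; ring⟩
  · obtain ⟨i, hi⟩ := hp
    rcases Int.even_or_odd s with hs | hs
    · obtain ⟨j, hj⟩ := hs
      exact ⟨j*j + i*i + i, by rw [hi, hj]; ring⟩
    · exfalso; obtain ⟨j, hj⟩ := hs; obtain ⟨m, hm⟩ := h; omega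

lemma nec4 {x y z k : ℤ} {X Y Z : Matrix (Fin 2) (Fin 2) ℤ}
    (hx : (4:ℤ) ∣ x) (hy : Odd y) (hz : Odd z) (hk : y + z = 2*k)
    (h : (!![k+2, 0; 0, k] : Matrix (Fin 2) (Fin 2) ℤ) = x • X ^ 2 + y • Y ^ 2 + z • Z ^ 2) :
    False := by
  have e00 := entries h 0 0
  have e01 := entries h 0 1
  have e10 := entries h 1 0
  have e11 := entries h 1 1
  rw [show (!![k+2,0;0,k] : Matrix (Fin 2) (Fin 2) ℤ) 0 0 = k+2 from rfl] at e00
  rw [show (!![k+2,0;0,k] : Matrix (Fin 2) (Fin 2) ℤ) 0 1 = 0 from rfl] at e01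
  rw [show (!![k+2,0;0,k] : Matrix (Fin 2) (Fin 2) ℤ) 1 0 = 0 from rfl] at e10
  rw [show (!![k+2,0;0,k] : Matrix (Fin 2) (Fin 2) ℤ) 1 1 = k from rfl] at e11
  set p := Y 0 0; set q := Y 0 1; set r := Y 1 0; set s := Y 1 1
  set p' := Z 0 0; set q' := Z 0 1; set r' := Z 1 0; set s' := Z 1 1
  have hdiff : (2:ℤ) = x*((X 0 0 * X 0 0 + X 0 1 * X 1 0) - (X 1 0 * X 0 1 + X 1 1 * X 1 1))
      + y*(p*p - s*s) + z*(p'*p' - s'*s') := by linear_combination e00 - e11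
  have h20 : (2 : ZMod 2) = 0 := rfl
  have sq2 : ∀ w : ZMod 2, w * w = w := by decide
  rcases Int.even_or_odd (p + s) with ht | ht <;> rcases Int.even_or_odd (p' + s') with hu | hu
  · -- both even : contradiction mod 4
    have c := congrArg (fun t : ℤ => (t : ZMod 4)) hdiff
    push_cast at c
    rw [dvd4_cast hx] at c
    have hA := dvd4_cast (sq_diff_dvd4 ht); push_cast at hA
    have hB := dvd4_cast (sq_diff_dvd4 hu); push_cast at hB
    have : (2 : ZMod 4) = 0 := by
      linear_combination c + (y : ZMod 4)*hA + (z : ZMod 4)*hB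
    exact absurd this (by decide)
  · -- t even, u odd: contradiction mod 2
    have c := congrArg (fun t : ℤ => (t : ZMod 2)) hdiff
    push_cast at c
    rw [(ZMod.intCast_zmod_eq_zero_iff_dvd x 2).mpr (dvd2_of_dvd4 hx),
      odd_cast2 hy, odd_cast2 hz] at c
    have c' : ((p:ZMod 2)*p - s*s) + ((p':ZMod 2)*p' - s'*s') = 0 := by
      linear_combination -c + h20
    have hE : (p : ZMod 2) + (s : ZMod 2) = 0 := by
      have := even_cast2 ht; push_cast at this; linear_combination this
    have hO : (p' : ZMod 2) + (s' : ZMod 2) = 1 := by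
      have := odd_cast2 hu; push_cast at this; linear_combination this
    have : (0 : ZMod 2) = 1 := by
      linear_combination c' - sq2 (p:ZMod 2) + sq2 (s:ZMod 2) - sq2 (p':ZMod 2) + sq2 (s':ZMod 2)
        - hE - hO + ((s:ZMod 2) + (s':ZMod 2) - 1)*h20
    exact absurd this (by decide)
  · -- t odd, u even: symmetric
    have c := congrArg (fun t : ℤ => (t : ZMod 2)) hdiff
    push_cast at c
    rw [(ZMod.intCast_zmod_eq_zero_iff_dvd x 2).mpr (dvd2_of_dvd4 hx),
      odd_cast2 hy, odd_cast2 hz] at c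
    have c' : ((p:ZMod 2)*p - s*s) + ((p':ZMod 2)*p' - s'*s') = 0 := by
      linear_combination -c + h20
    have hE : (p' : ZMod 2) + (s' : ZMod 2) = 0 := by
      have := even_cast2 hu; push_cast at this; linear_combination this
    have hO : (p : ZMod 2) + (s : ZMod 2) = 1 := by
      have := odd_cast2 ht; push_cast at this; linear_combination this
    have : (0 : ZMod 2) = 1 := by
      linear_combination c' - sq2 (p:ZMod 2) + sq2 (s:ZMod 2) - sq2 (p':ZMod 2) + sq2 (s':ZMod 2)
        - hE - hO + ((s:ZMod 2) + (s':ZMod 2) - 1)*h20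
    exact absurd this (by decide)
  · -- both odd
    obtain ⟨w, hw⟩ := sq_sum_odd ht
    obtain ⟨w', hw'⟩ := sq_sum_odd hu
    obtain ⟨n, hn⟩ := id hy
    obtain ⟨n', hn'⟩ := id hz
    have hsum : (2:ℤ) = x*((X 0 0 * X 0 0 + X 0 1 * X 1 0) + (X 1 0 * X 0 1 + X 1 1 * X 1 1))
        + 4*(y*w + z*w') + 2*y*(q*r) + 2*z*(q'*r') := by
      linear_combination e00 + e11 + y*hw + z*hw' + hk
    have c := congrArg (fun t : ℤ => (t : ZMod 4)) hsum
    push_cast at c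
    rw [dvd4_cast hx] at c
    have hy4 := congrArg (fun t : ℤ => (t : ZMod 4)) hn
    have hz4 := congrArg (fun t : ℤ => (t : ZMod 4)) hn'
    push_cast at hy4 hz4
    have h44 : (4 : ZMod 4) = 0 := rfl
    have hqr : (2:ℤ) ∣ (q*r + q'*r' - 1) := by
      have c2 : ((2*(q*r + q'*r' - 1) : ℤ) : ZMod 4) = 0 := by
        push_cast
        linear_combination -c - 2*(q:ZMod 4)*(r:ZMod 4)*hy4 - 2*(q':ZMod 4)*(r':ZMod 4)*hz4
          - ((y:ZMod 4)*(w:ZMod 4) + (z:ZMod 4)*(w':ZMod 4) + (n:ZMod 4)*(q:ZMod 4)*(r:ZMod 4)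
             + (n':ZMod 4)*(q':ZMod 4)*(r':ZMod 4))*h44
      have := (ZMod.intCast_zmod_eq_zero_iff_dvd _ 4).mp c2
      omega
    have hOt : (p : ZMod 2) + (s : ZMod 2) = 1 := by
      have := odd_cast2 ht; push_cast at this; linear_combination this
    have hOu : (p' : ZMod 2) + (s' : ZMod 2) = 1 := by
      have := odd_cast2 hu; push_cast at this; linear_combination this
    have c01 := congrArg (fun t : ℤ => (t : ZMod 2)) e01
    have c10 := congrArg (fun t : ℤ => (t : ZMod 2)) e10
    push_cast at c01 c10
    rw [(ZMod.intCast_zmod_eq_zero_iff_dvd x 2).mpr (dvd2_of_dvd4 hx),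
      odd_cast2 hy, odd_cast2 hz] at c01 c10
    have hq : (q : ZMod 2) + (q' : ZMod 2) = 0 := by
      linear_combination -c01 - (q : ZMod 2)*hOt - (q' : ZMod 2)*hOu
    have hr : (r : ZMod 2) + (r' : ZMod 2) = 0 := by
      linear_combination -c10 - (r : ZMod 2)*hOt - (r' : ZMod 2)*hOu
    have hqr2 : ((q*r + q'*r' - 1 : ℤ) : ZMod 2) = 0 :=
      (ZMod.intCast_zmod_eq_zero_iff_dvd _ 2).mpr hqr
    push_cast at hqr2
    have : (0 : ZMod 2) = 1 := by
      linear_combination -hqr2 + (r:ZMod 2)*hq + (q':ZMod 2)*hr + (-1 - (q':ZMod 2)*(r:ZMod 2))*h20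
    exact absurd this (by decide)

lemma rep_swap23 {x y z : ℤ} {M : Matrix (Fin 2) (Fin 2) ℤ}
    (h : ∃ A B C : Matrix (Fin 2) (Fin 2) ℤ, M = x • A ^ 2 + y • B ^ 2 + z • C ^ 2) :
    ∃ A B C : Matrix (Fin 2) (Fin 2) ℤ, M = x • A ^ 2 + z • B ^ 2 + y • C ^ 2 := by
  obtain ⟨A, B, C, h⟩ := h
  exact ⟨A, C, B, by rw [h]; abel⟩

lemma rep_swap12 {x y z : ℤ} {M : Matrix (Fin 2) (Fin 2) ℤ}
    (h : ∃ A B C : Matrix (Fin 2) (Fin 2) ℤ, M = x • A ^ 2 + y • B ^ 2 + z • C ^ 2) :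
    ∃ A B C : Matrix (Fin 2) (Fin 2) ℤ, M = y • A ^ 2 + x • B ^ 2 + z • C ^ 2 := by
  obtain ⟨A, B, C, h⟩ := h
  exact ⟨B, A, C, by rw [h]; abel⟩

/-- from (x,y,z)-order to (z,x,y)-order -/
lemma rep_rot {x y z : ℤ} {M : Matrix (Fin 2) (Fin 2) ℤ}
    (h : ∃ A B C : Matrix (Fin 2) (Fin 2) ℤ, M = x • A ^ 2 + y • B ^ 2 + z • C ^ 2) :
    ∃ A B C : Matrix (Fin 2) (Fin 2) ℤ, M = z • A ^ 2 + x • B ^ 2 + y • C ^ 2 := by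
  obtain ⟨A, B, C, h⟩ := h
  exact ⟨C, A, B, by rw [h]; abel⟩

lemma rep_transpose {x y z : ℤ} {M : Matrix (Fin 2) (Fin 2) ℤ}
    (h : ∃ A B C : Matrix (Fin 2) (Fin 2) ℤ, Mᵀ = x • A ^ 2 + y • B ^ 2 + z • C ^ 2) :
    ∃ A B C : Matrix (Fin 2) (Fin 2) ℤ, M = x • A ^ 2 + y • B ^ 2 + z • C ^ 2 := by
  obtain ⟨A, B, C, h⟩ := h
  refine ⟨Aᵀ, Bᵀ, Cᵀ, ?_⟩
  have hM : M = (x • A ^ 2 + y • B ^ 2 + z • C ^ 2)ᵀ := by rw [← h, transpose_transpose]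
  rw [hM, transpose_add, transpose_add, transpose_smul, transpose_smul, transpose_smul,
    pow_two, pow_two, pow_two, pow_two, pow_two, pow_two,
    transpose_mul, transpose_mul, transpose_mul]

lemma suff (a b c : ℤ) (hab : IsCoprime a b) (hbc : IsCoprime b c) (hac : IsCoprime a c)
    (hcase : (Odd a ∧ Odd b ∧ Odd c) ∨ (∃ a₀, a = 2*a₀ ∧ Odd a₀ ∧ Odd b ∧ Odd c))
    (M : Matrix (Fin 2) (Fin 2) ℤ) :
    ∃ A B C : Matrix (Fin 2) (Fin 2) ℤ, M = a • A ^ 2 + b • B ^ 2 + c • C ^ 2 := by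
  rcases hcase with ⟨ha, hb, hc⟩ | ⟨a₀, ha2, ha₀, hb, hc⟩
  · -- all odd : scheme S1
    rcases Int.even_or_odd (M 0 0 + M 1 1) with htr | htr
    · -- trace even, t' = 1
      have hP : Odd (b*c^2) := hb.mul (hc.pow)
      have hdvd : (2:ℤ) ∣ (M 0 0 - M 1 1 + a + b*c^2) := by
        obtain ⟨P, hPd⟩ : ∃ q : ℤ, q = b*c^2 := ⟨_, rfl⟩
        rw [← hPd]
        have h1 := Int.odd_iff.mp ha
        have h2 := Int.odd_iff.mp (hPd ▸ hP)
        have h3 := Int.even_iff.mp htr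
        omega
      obtain ⟨k, hk⟩ := hdvd
      exact soak a b c 1 c 1 a (b*c) b (M 0 1) (M 1 0) k M (by ring) (by ring) (by ring)
        (hab.mul_right hac) hac hbc (one_mul _).symm (one_mul _).symm
        (by linear_combination hk)
    · -- trace odd, t' = a+1
      have hta : IsCoprime a (a+1) := ⟨-1, 1, by ring⟩
      have hP : Even (b*(c*(a+1))^2) := by
        have h1 : Even (a+1) := by
          obtain ⟨m, hm⟩ := ha; exact ⟨m+1, by omega⟩
        rw [pow_two]
        exact ((h1.mul_left c).mul_right _).mul_left b
      have hdvd : (2:ℤ) ∣ (M 0 0 - M 1 1 + a + b*(c*(a+1))^2) := by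
        obtain ⟨P, hPd⟩ : ∃ q : ℤ, q = b*(c*(a+1))^2 := ⟨_, rfl⟩
        rw [← hPd]
        have h1 := Int.odd_iff.mp ha
        have h2 := Int.even_iff.mp (hPd ▸ hP)
        have h3 := Int.odd_iff.mp htr
        omega
      obtain ⟨k, hk⟩ := hdvd
      exact soak a b c 1 (c*(a+1)) 1 a (b*(c*(a+1))) (b*(a+1)) (M 0 1) (M 1 0) k M
        (by ring) (by ring) (by ring)
        (hab.mul_right (hac.mul_right hta)) hac hbc (one_mul _).symm (one_mul _).symm
        (by linear_combination hk)
  · -- a = 2a₀ even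
    have hdvd_a₀ : a₀ ∣ a := ⟨2, by omega⟩
    have hba₀ : IsCoprime a₀ b := hab.of_isCoprime_of_dvd_left hdvd_a₀
    have hca₀ : IsCoprime a₀ c := hac.of_isCoprime_of_dvd_left hdvd_a₀
    rcases Int.even_or_odd (M 0 0 + M 1 1) with htr | htr
    · -- trace even
      rcases Int.even_or_odd (M 0 1) with hm01 | hm01
      · rcases Int.even_or_odd (M 1 0) with hm10 | hm10
        · -- both off-diagonals even : D schemes
          obtain ⟨μ, hμ⟩ := hm01
          obtain ⟨ν, hν⟩ := hm10
          have hm01' : M 0 1 = 2*μ := by omega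
          have hm10' : M 1 0 = 2*ν := by omega
          have htr' := Int.even_iff.mp htr
          have hdiff : (M 0 0 - M 1 1) % 4 = 0 ∨ (M 0 0 - M 1 1) % 4 = 2 := by omega
          rcases hdiff with hdiff | hdiff
          · -- D-even
            obtain ⟨w, hw⟩ : (4:ℤ) ∣ (M 0 0 - M 1 1) := by omega
            apply rep_swap23
            exact soak a c b 2 (2*b) 2 a (b*c) c μ ν (w + a + c*b^2) M
              (by ring) (by ring) (by ring)
              (hab.mul_right hac) hab hbc.symm hm01' hm10'
              (by linear_combination hw)
          · -- D-odd
            obtain ⟨w, hw⟩ : ∃ w, M 0 0 - M 1 1 = 4*w + 2 := by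
              exact ⟨(M 0 0 - M 1 1 - 2)/4, by omega⟩
            obtain ⟨α, hα⟩ := ha₀
            apply rep_swap23
            exact soak a c b 1 (2*b) 2 a₀ (b*c) c μ ν (w + α + 1 + c*b^2) M
              (by linear_combination ha2) (by ring) (by ring)
              (hba₀.mul_right hca₀) hba₀ hbc.symm hm01' hm10'
              (by linear_combination hw + ha2 + 2*hα)
        · -- M 1 0 odd : transpose then weave
          apply rep_transpose
          have hP : Odd (c*a₀^2) := hc.mul (ha₀.pow)
          have hdvd : (2:ℤ) ∣ (Mᵀ 0 0 - Mᵀ 1 1 + b + c*a₀^2) := by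
            obtain ⟨P, hPd⟩ : ∃ q : ℤ, q = c*a₀^2 := ⟨_, rfl⟩
            rw [← hPd]
            have h1 := Int.odd_iff.mp hb
            have h2 := Int.odd_iff.mp (hPd ▸ hP)
            have h3 := Int.even_iff.mp htr
            have e1 : Mᵀ 0 0 = M 0 0 := rfl
            have e2 : Mᵀ 1 1 = M 1 1 := rfl
            omega
          obtain ⟨k, hk⟩ := hdvd
          have hres := weave b c a₀ k Mᵀ (hbc.mul_right hba₀.symm) hba₀.symm hca₀.symm
            hb hc ha₀ (by rw [Matrix.transpose_apply]; exact hm10) hk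
          rw [← ha2] at hres
          exact rep_rot hres
      · -- M 0 1 odd : weave
        have hP : Odd (c*a₀^2) := hc.mul (ha₀.pow)
        have hdvd : (2:ℤ) ∣ (M 0 0 - M 1 1 + b + c*a₀^2) := by
          obtain ⟨P, hPd⟩ : ∃ q : ℤ, q = c*a₀^2 := ⟨_, rfl⟩
          rw [← hPd]
          have h1 := Int.odd_iff.mp hb
          have h2 := Int.odd_iff.mp (hPd ▸ hP)
          have h3 := Int.even_iff.mp htr
          omega
        obtain ⟨k, hk⟩ := hdvd
        have hres := weave b c a₀ k M (hbc.mul_right hba₀.symm) hba₀.symm hca₀.symm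
          hb hc ha₀ hm01 hk
        rw [← ha2] at hres
        exact rep_rot hres
    · -- trace odd : S2
      have hP : Odd (b*c^2) := hb.mul (hc.pow)
      have hdvd : (2:ℤ) ∣ (M 0 0 - M 1 1 + a + b*c^2) := by
        obtain ⟨P, hPd⟩ : ∃ q : ℤ, q = b*c^2 := ⟨_, rfl⟩
        rw [← hPd]
        have h1 := Int.odd_iff.mp ha₀
        have h2 := Int.odd_iff.mp (hPd ▸ hP)
        have h3 := Int.odd_iff.mp htr
        omega
      obtain ⟨k, hk⟩ := hdvd
      exact soak a b c 1 c 1 a (b*c) b (M 0 1) (M 1 0) k M (by ring) (by ring) (by ring)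
        (hab.mul_right hac) hac hbc (one_mul _).symm (one_mul _).symm
        (by linear_combination hk)


lemma not_both_even {x y : ℤ} (h : IsCoprime x y) (hx : Even x) (hy : Even y) : False := by
  obtain ⟨m, hm⟩ := hx
  obtain ⟨n, hn⟩ := hy
  have := h.isUnit_of_dvd' (show (2:ℤ) ∣ x from ⟨m, by omega⟩) (show (2:ℤ) ∣ y from ⟨n, by omega⟩)
  rcases Int.isUnit_iff.mp this with h2 | h2 <;> norm_num at h2

lemma odd_of_cop {x y : ℤ} (h : IsCoprime x y) (hx : Even x) : Odd y := by
  rcases Int.even_or_odd y with hy | hy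
  · exact absurd (not_both_even h hx hy) not_false
  · exact hy

lemma cop2 {x : ℤ} (h : Odd x) : IsCoprime (2:ℤ) x := by
  obtain ⟨n, hn⟩ := h
  exact ⟨-n, 1, by omega⟩

lemma nec4top {x y z : ℤ} (hxy : IsCoprime x y) (hxz : IsCoprime x z) (hx : Even x)
    (h4 : (4:ℤ) ∣ x*y*z)
    (hrep : ∀ k : ℤ, ∃ A B C : Matrix (Fin 2) (Fin 2) ℤ,
      (!![k+2,0;0,k] : Matrix (Fin 2) (Fin 2) ℤ) = x • A ^ 2 + y • B ^ 2 + z • C ^ 2) :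
    False := by
  have hy : Odd y := odd_of_cop hxy hx
  have hz : Odd z := odd_of_cop hxz hx
  have hyz : Odd (y*z) := hy.mul hz
  have ic4 : IsCoprime (4:ℤ) (y*z) := by
    have := (cop2 hyz).mul_left (cop2 hyz)
    rwa [show (2:ℤ)*2 = 4 by norm_num] at this
  have h4x : (4:ℤ) ∣ x := by
    rw [mul_assoc] at h4
    exact ic4.dvd_of_dvd_mul_right h4
  obtain ⟨m, hm⟩ := hy
  obtain ⟨n, hn⟩ := hz
  obtain ⟨A, B, C, hr⟩ := hrep (m+n+1)
  exact nec4 h4x ⟨m, hm⟩ ⟨n, hn⟩ (by omega) hr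

theorem stmt6 (a b c : ℤ) :
    (∀ M : Matrix (Fin 2) (Fin 2) ℤ,
        ∃ A B C : Matrix (Fin 2) (Fin 2) ℤ, M = a • A ^ 2 + b • B ^ 2 + c • C ^ 2) ↔
      (IsCoprime a b ∧ IsCoprime b c ∧ IsCoprime c a ∧ ¬ (4 ∣ a * b * c)) := by
  constructor
  · intro h
    have cop : ∀ x y : ℤ, ¬ IsCoprime x y → ∃ p : ℕ, p.Prime ∧ (p:ℤ) ∣ x ∧ (p:ℤ) ∣ y := by
      intro x y hxy
      have hg : Int.gcd x y ≠ 1 := fun hg => hxy (Int.isCoprime_iff_gcd_eq_one.mpr hg)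
      obtain ⟨p, hp, hpd⟩ := Nat.exists_prime_and_dvd hg
      exact ⟨p, hp, (Int.natCast_dvd_natCast.mpr hpd).trans (Int.gcd_dvd_left x y),
        (Int.natCast_dvd_natCast.mpr hpd).trans (Int.gcd_dvd_right x y)⟩
    have hab : IsCoprime a b := by
      by_contra hcon
      obtain ⟨p, hp, hpa, hpb⟩ := cop a b hcon
      obtain ⟨A, B, C, hrep⟩ := h !![0,1;0,0]
      exact nec_cop hp hpa hpb hrep
    have hbc : IsCoprime b c := by
      by_contra hcon
      obtain ⟨p, hp, hpb, hpc⟩ := cop b c hcon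
      obtain ⟨A, B, C, hrep⟩ := rep_rot (rep_rot (h !![0,1;0,0]))
      exact nec_cop hp hpb hpc hrep
    have hca : IsCoprime c a := by
      by_contra hcon
      obtain ⟨p, hp, hpc, hpa⟩ := cop c a hcon
      obtain ⟨A, B, C, hrep⟩ := rep_rot (h !![0,1;0,0])
      exact nec_cop hp hpc hpa hrep
    refine ⟨hab, hbc, hca, ?_⟩
    intro h4
    rcases Int.even_or_odd a with hea | hoa
    · exact nec4top hab hca.symm hea h4 (fun k => h _)
    rcases Int.even_or_odd b with heb | hob
    · exact nec4top hab.symm hbc heb ((show a*b*c = b*a*c by ring) ▸ h4)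
        (fun k => rep_swap12 (h _))
    rcases Int.even_or_odd c with hec | hoc
    · exact nec4top hca hbc.symm hec ((show a*b*c = c*a*b by ring) ▸ h4)
        (fun k => rep_rot (h _))
    · obtain ⟨v, hv⟩ := (hoa.mul hob).mul hoc
      obtain ⟨w, hw⟩ := h4
      omega
  · rintro ⟨hab, hbc, hca, h4⟩ M
    rcases Int.even_or_odd a with hea | hoa
    · have hb : Odd b := odd_of_cop hab hea
      have hc : Odd c := odd_of_cop hca.symm hea
      obtain ⟨m, hm⟩ := hea
      have hmo : Odd m := by
        rcases Int.even_or_odd m with hem | hom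
        · exfalso
          obtain ⟨j, hj⟩ := hem
          exact h4 (Dvd.dvd.mul_right (Dvd.dvd.mul_right ⟨j, by omega⟩ b) c)
        · exact hom
      exact suff a b c hab hbc hca.symm (Or.inr ⟨m, by omega, hmo, hb, hc⟩) M
    rcases Int.even_or_odd b with heb | hob
    · have ha : Odd a := odd_of_cop hab.symm heb
      have hc : Odd c := odd_of_cop hbc heb
      obtain ⟨m, hm⟩ := heb
      have hmo : Odd m := by
        rcases Int.even_or_odd m with hem | hom
        · exfalso
          obtain ⟨j, hj⟩ := hem
          refine h4 ?_
          have hd : (4:ℤ) ∣ b := ⟨j, by omega⟩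
          exact (hd.mul_left a).mul_right c
        · exact hom
      exact rep_swap12 (suff b a c hab.symm hca.symm hbc (Or.inr ⟨m, by omega, hmo, ha, hc⟩) M)
    rcases Int.even_or_odd c with hec | hoc
    · have ha : Odd a := odd_of_cop hca hec
      have hb : Odd b := odd_of_cop hbc.symm hec
      obtain ⟨m, hm⟩ := hec
      have hmo : Odd m := by
        rcases Int.even_or_odd m with hem | hom
        · exfalso
          obtain ⟨j, hj⟩ := hem
          exact h4 (Dvd.dvd.mul_left ⟨j, by omega⟩ (a*b))
        · exact hom
      exact rep_rot (rep_rot (suff c a b hca hab hbc.symm (Or.inr ⟨m, by omega, hmo, ha, hb⟩) M))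
    · exact suff a b c hab hbc hca.symm (Or.inl ⟨hoa, hob, hoc⟩) M
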